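/- Let dim H = 4. Let ω ∈ S²H*⊗Λ²V* be nondegenerate of rank 12 and suppose there exists ξ ∈ H*∖{0} with Im(ω̃) ∩ (⟨ξ⟩⊗V*) = 0. Then every σ ∈ Λ²H⊗S²V with σ̃∘ω̃ = 0 satisfies σ = 0. (This is the transcription of the paper's result that H²(S²E_ω) = 0 for every ω in the union of the sets M(4,4)_ξ, i.e. that this open part of M(4,4) is a smooth transversal intersection.) -/

import Mathlib

open TensorProduct Module

/-- Let `dim H = 4` and let `ω ∈ S²H*⊗Λ²V*` (encoded by `φ`, with
induced map `W = ω̃`) be nondegenerate of rank 12, and suppose there is a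
nonzero `ξ ∈ H*` with `Im(ω̃) ∩ (⟨ξ⟩⊗V*) = 0`.  Then every `σ ∈ Λ²H⊗S²V`
(encoded by `ψ`, with induced map `S = σ̃`) with `σ̃ ∘ ω̃ = 0` vanishes.
This transcribes: `H²(S²E_ω) = 0` for every `ω` in `⋃_ξ M(4,4)_ξ`. -/
theorem statement3
    (k : Type) [Field k] [IsAlgClosed k] [CharZero k]
    (V H : Type) [AddCommGroup V] [Module k V] [AddCommGroup H] [Module k H]
    [FiniteDimensional k V] [FiniteDimensional k H]
    (hV : finrank k V = 4) (hH : finrank k H = 4)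
    (φ : H →ₗ[k] H →ₗ[k] V →ₗ[k] V →ₗ[k] k)
    (hφsymm : ∀ h h' : H, φ h h' = φ h' h)
    (hφalt : ∀ (h h' : H) (v : V), φ h h' v v = 0)
    (W : H ⊗[k] V →ₗ[k] Dual k (H ⊗[k] V))
    (hW : ∀ (h h' : H) (v v' : V), W (h ⊗ₜ v) (h' ⊗ₜ v') = φ h h' v v')
    (hrank : finrank k (LinearMap.range W) = 12)
    (hnd : ∀ h : H, h ≠ 0 → ∀ v : V, v ≠ 0 → W (h ⊗ₜ[k] v) ≠ 0)
    (hξ : ∃ ξ : Dual k H, ξ ≠ 0 ∧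
      LinearMap.range W ⊓
        Submodule.span k {f : Dual k (H ⊗[k] V) |
          ∃ z : Dual k V, f = dualDistrib k H V (ξ ⊗ₜ z)} = ⊥)
    (ψ : Dual k H →ₗ[k] Dual k H →ₗ[k] Dual k V →ₗ[k] Dual k V →ₗ[k] k)
    (hψalt : ∀ ξ : Dual k H, ψ ξ ξ = 0)
    (hψsymm : ∀ (ξ ξ' : Dual k H) (z z' : Dual k V), ψ ξ ξ' z z' = ψ ξ ξ' z' z)
    (S : Dual k (H ⊗[k] V) →ₗ[k] H ⊗[k] V)
    (hS : ∀ (ξ ξ' : Dual k H) (z z' : Dual k V),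
      dualDistrib k H V (ξ' ⊗ₜ z') (S (dualDistrib k H V (ξ ⊗ₜ z))) = ψ ξ ξ' z z')
    (hcomp : S ∘ₗ W = 0) :
    ψ = 0 := by
  classical
  obtain ⟨ξ, hξ0, hinf⟩ := hξ
  -- φ is skew under simultaneous exchange
  have hφskew : ∀ (h h' : H) (v v' : V), φ h h' v v' = - φ h' h v' v := by
    intro h h' v v'
    have h0 := hφalt h h' (v + v')
    simp only [map_add, LinearMap.add_apply, hφalt, zero_add, add_zero] at h0
    rw [hφsymm h' h]
    linear_combination h0
  -- W is a skew form
  have hWskew : ∀ x y : H ⊗[k] V, W x y = - W y x := by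
    intro x y
    induction x using TensorProduct.induction_on with
    | zero => simp
    | tmul h v =>
      induction y using TensorProduct.induction_on with
      | zero => simp
      | tmul h' v' => rw [hW, hW, hφskew]
      | add y₁ y₂ ih₁ ih₂ =>
        simp only [map_add, LinearMap.add_apply, ih₁, ih₂]; ring
    | add x₁ x₂ ih₁ ih₂ =>
      simp only [map_add, LinearMap.add_apply, ih₁, ih₂]; ring
  -- ψ is alternating in the first two arguments
  have hψskew : ∀ ξ₁ ξ₂ : Dual k H, ψ ξ₁ ξ₂ = - ψ ξ₂ ξ₁ := by
    intro ξ₁ ξ₂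
    have h0 := hψalt (ξ₁ + ξ₂)
    simp only [map_add, LinearMap.add_apply, hψalt, zero_add, add_zero] at h0
    refine LinearMap.ext fun z => LinearMap.ext fun z' => ?_
    have h1 := LinearMap.congr_fun (LinearMap.congr_fun h0 z) z'
    simp only [LinearMap.add_apply, LinearMap.zero_apply] at h1
    simp only [LinearMap.neg_apply]
    linear_combination h1
  -- surjectivity of dualDistrib
  have hsurj : Function.Surjective (dualDistrib k H V) := by
    intro f
    refine ⟨(dualDistribEquiv k H V).symm f, ?_⟩
    have h1 : dualDistrib k H V ((dualDistribEquiv k H V).symm f)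
        = (dualDistribEquiv k H V) ((dualDistribEquiv k H V).symm f) := rfl
    rw [h1, LinearEquiv.apply_symm_apply]
  -- S (W x) = 0
  have hSW0 : ∀ x : H ⊗[k] V, S (W x) = 0 := by
    intro x
    have := LinearMap.congr_fun hcomp x
    simpa using this
  -- S is a skew form
  have hSskew : ∀ g g' : Dual k (H ⊗[k] V), g' (S g) = - g (S g') := by
    have key : ∀ a b : Dual k H ⊗[k] Dual k V,
        dualDistrib k H V b (S (dualDistrib k H V a))
          = - dualDistrib k H V a (S (dualDistrib k H V b)) := by
      intro a b
      induction a using TensorProduct.induction_on with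
      | zero => simp
      | tmul ξ₁ z₁ =>
        induction b using TensorProduct.induction_on with
        | zero => simp
        | tmul ξ₂ z₂ =>
          rw [hS ξ₁ ξ₂ z₁ z₂, hS ξ₂ ξ₁ z₂ z₁, hψskew ξ₁ ξ₂]
          simp only [LinearMap.neg_apply, neg_inj]
          exact hψsymm ξ₂ ξ₁ z₁ z₂
        | add b₁ b₂ ih₁ ih₂ =>
          simp only [map_add, LinearMap.add_apply, ih₁, ih₂]; ring
      | add a₁ a₂ ih₁ ih₂ =>
        simp only [map_add, LinearMap.add_apply, ih₁, ih₂]; ring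
    intro g g'
    obtain ⟨a, rfl⟩ := hsurj g
    obtain ⟨b, rfl⟩ := hsurj g'
    exact key a b
  -- the map z ↦ ξ ⊗ z, dualized
  set L : Dual k V →ₗ[k] Dual k (H ⊗[k] V) :=
    (dualDistrib k H V) ∘ₗ (TensorProduct.mk k (Dual k H) (Dual k V) ξ) with hLdef
  have hL : ∀ z : Dual k V, L z = dualDistrib k H V (ξ ⊗ₜ z) := fun z => rfl
  -- the span in hinf is the range of L
  have hD : Submodule.span k {f : Dual k (H ⊗[k] V) |
      ∃ z : Dual k V, f = dualDistrib k H V (ξ ⊗ₜ z)} = LinearMap.range L := by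
    have hset : {f : Dual k (H ⊗[k] V) | ∃ z : Dual k V, f = dualDistrib k H V (ξ ⊗ₜ z)}
        = Set.range L := by
      ext f
      constructor
      · rintro ⟨z, rfl⟩; exact ⟨z, rfl⟩
      · rintro ⟨z, rfl⟩; exact ⟨z, rfl⟩
    rw [hset, ← LinearMap.coe_range, Submodule.span_eq]
  -- L is injective
  have hLker : ∀ z : Dual k V, L z = 0 → z = 0 := by
    intro z hz
    obtain ⟨h0, hh0⟩ : ∃ h : H, ξ h ≠ 0 := by
      by_contra hc
      push_neg at hc
      exact hξ0 (by ext h; simpa using hc h)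
    ext v
    have h1 := LinearMap.congr_fun hz (h0 ⊗ₜ[k] v)
    rw [hL] at h1
    simp only [dualDistrib_apply, LinearMap.zero_apply] at h1
    rcases mul_eq_zero.mp h1 with h | h
    · exact absurd h hh0
    · simpa using h
  have hLinj : Function.Injective L :=
    LinearMap.ker_eq_bot.mp (LinearMap.ker_eq_bot'.mpr hLker)
  -- dimension count: range W ⊕ range L is everything
  have hdim16 : finrank k (Dual k (H ⊗[k] V)) = 16 := by
    rw [Subspace.dual_finrank_eq, Module.finrank_tensorProduct, hH, hV]
  have hDdim : finrank k (LinearMap.range L) = 4 := by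
    rw [LinearMap.finrank_range_of_inj hLinj, Subspace.dual_finrank_eq, hV]
  rw [hD] at hinf
  have hsup : LinearMap.range W ⊔ LinearMap.range L = ⊤ := by
    apply Submodule.eq_top_of_finrank_eq
    have hfr := Submodule.finrank_sup_add_finrank_inf_eq
      (LinearMap.range W) (LinearMap.range L)
    rw [hinf, finrank_bot, hrank, hDdim] at hfr
    rw [hdim16]
    omega
  -- S vanishes on range L
  have hSD : ∀ z : Dual k V, S (L z) = 0 := by
    intro z
    refine (Module.forall_dual_apply_eq_zero_iff k _).mp ?_
    intro g
    have hg : g ∈ LinearMap.range W ⊔ LinearMap.range L := by rw [hsup]; trivial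
    obtain ⟨g₁, hg₁, g₂, hg₂, rfl⟩ := Submodule.mem_sup.mp hg
    obtain ⟨x, rfl⟩ := hg₁
    obtain ⟨z', rfl⟩ := hg₂
    rw [LinearMap.add_apply]
    have h1 : (W x) (S (L z)) = 0 := by
      have h := hSskew (L z) (W x)
      rw [hSW0 x, map_zero, neg_zero] at h
      exact h
    have h2 : (L z') (S (L z)) = 0 := by
      have h := hS ξ ξ z z'
      rw [hψalt ξ] at h
      simp only [LinearMap.zero_apply] at h
      rw [hL, hL]
      exact h
    rw [h1, h2, add_zero]
  -- hence S = 0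
  have hS0 : S = 0 := by
    ext g
    have hg : g ∈ LinearMap.range W ⊔ LinearMap.range L := by rw [hsup]; trivial
    obtain ⟨g₁, hg₁, g₂, hg₂, rfl⟩ := Submodule.mem_sup.mp hg
    obtain ⟨x, rfl⟩ := hg₁
    obtain ⟨z, rfl⟩ := hg₂
    rw [map_add, hSW0, hSD, add_zero, LinearMap.zero_apply]
  -- conclude
  ext ξ₁ ξ₂ z z'
  rw [← hS ξ₁ ξ₂ z z', hS0]
  simp
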